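/- Let p ∈ (0,1) be real. There exist x, y ∈ ℕ such that p·(1/12)^x·(1/2)^y + (1−p)·(1/3)^x·(1/18)^y < (1/6)^x·(1/6)^y if and only if p ≠ 1/2. -/

import Mathlib

open Real

private lemma log2_pos : 0 < Real.log 2 := Real.log_pos (by norm_num)
private lemma log3_pos : 0 < Real.log 3 := Real.log_pos (by norm_num)

private lemma pow_ne : ∀ a b : ℕ, 0 < a → (2:ℝ)^a = (3:ℝ)^b → False := by
  intro a b ha hab
  have h : (2:ℕ)^a = 3^b := by exact_mod_cast hab
  have h2 : 2 ∣ (2:ℕ)^a := dvd_pow_self 2 ha.ne'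
  rw [h] at h2
  have := Nat.Prime.dvd_of_dvd_pow Nat.prime_two h2
  omega

/-- The subgroup generated by log 2 and log 3 is dense. -/
private lemma dense_G :
    Dense ((AddSubgroup.closure ({Real.log 2, Real.log 3} : Set ℝ) : AddSubgroup ℝ) : Set ℝ) := by
  rcases (AddSubgroup.closure ({Real.log 2, Real.log 3} : Set ℝ)).dense_or_cyclic with h | ⟨a, ha⟩
  · exact h
  · exfalso
    have h2 : Real.log 2 ∈ AddSubgroup.closure ({Real.log 2, Real.log 3} : Set ℝ) :=
      AddSubgroup.subset_closure (by simp)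
    have h3 : Real.log 3 ∈ AddSubgroup.closure ({Real.log 2, Real.log 3} : Set ℝ) :=
      AddSubgroup.subset_closure (by simp)
    rw [ha, AddSubgroup.mem_closure_singleton] at h2 h3
    obtain ⟨m, hm⟩ := h2
    obtain ⟨n, hn⟩ := h3
    have key : (n : ℝ) * Real.log 2 = (m : ℝ) * Real.log 3 := by
      rw [← hm, ← hn]; push_cast [zsmul_eq_mul]; ring
    have hm0 : m ≠ 0 := by
      rintro rfl; simp at hm; exact absurd hm.symm (ne_of_gt log2_pos)
    have hn0 : n ≠ 0 := by
      rintro rfl; simp at hn; exact absurd hn.symm (ne_of_gt log3_pos)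
    have hexp : (2 : ℝ) ^ n = (3 : ℝ) ^ m := by
      have := congrArg Real.exp key
      rwa [← Real.log_zpow, ← Real.log_zpow, Real.exp_log (by positivity),
        Real.exp_log (by positivity)] at this
    rcases lt_or_gt_of_ne hn0 with hneg | hpos
    · -- n < 0; then m < 0 (since n log2 = m log3, logs positive)
      have hmneg : m < 0 := by
        by_contra hm'
        push_neg at hm'
        have : (0:ℝ) ≤ (m:ℝ) := by exact_mod_cast hm'
        nlinarith [log2_pos, log3_pos, (by exact_mod_cast hneg : (n:ℝ) < 0)]
      have hexp' : (2 : ℝ) ^ (-n).toNat = (3 : ℝ) ^ (-m).toNat := by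
        have : (2 : ℝ) ^ (-n) = (3 : ℝ) ^ (-m) := by
          rw [zpow_neg, zpow_neg, hexp]
        rw [← zpow_natCast, ← zpow_natCast, Int.toNat_of_nonneg (by omega),
          Int.toNat_of_nonneg (by omega)]
        exact this
      exact pow_ne _ _ (by omega) hexp'
    · have hmpos : 0 < m := by
        by_contra hm'
        push_neg at hm'
        have : (m:ℝ) ≤ 0 := by exact_mod_cast hm'
        nlinarith [log2_pos, log3_pos, (by exact_mod_cast hpos : (0:ℝ) < n)]
      have hexp' : (2 : ℝ) ^ n.toNat = (3 : ℝ) ^ m.toNat := by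
        rw [← zpow_natCast, ← zpow_natCast, Int.toNat_of_nonneg (by omega),
          Int.toNat_of_nonneg (by omega)]
        exact hexp
      exact pow_ne _ _ (by omega) hexp'

/-- There is an element x log2 - y log3 with x y naturals, of absolute value in (0, ε). -/
private lemma small_elem {ε : ℝ} (hε : 0 < ε) :
    ∃ x y : ℕ, x * Real.log 2 - y * Real.log 3 ≠ 0 ∧
      |(x : ℝ) * Real.log 2 - y * Real.log 3| < ε := by
  set ε' := min ε (Real.log 2) with hε'
  have hε'pos : 0 < ε' := lt_min hε log2_pos
  have hε'le : ε' ≤ ε := min_le_left _ _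
  have hε'le2 : ε' ≤ Real.log 2 := min_le_right _ _
  -- find a subgroup element in (0, ε')
  have hopen : IsOpen (Set.Ioo (0:ℝ) ε') := isOpen_Ioo
  have hne : (Set.Ioo (0:ℝ) ε').Nonempty := ⟨ε'/2, by constructor <;> linarith⟩
  obtain ⟨s, hsmem, hsG⟩ := dense_G.inter_open_nonempty _ hopen hne
  rw [SetLike.mem_coe, AddSubgroup.mem_closure_pair] at hsG
  obtain ⟨a, b, hab⟩ := hsG
  have hs0 : 0 < s := hsmem.1
  have hsε : s < ε' := hsmem.2
  have habs : (a:ℝ) * Real.log 2 + (b:ℝ) * Real.log 3 = s := by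
    rw [← hab]; push_cast [zsmul_eq_mul]; ring
  -- signs of a, b are opposite
  have hL2 := log2_pos; have hL3 := log3_pos
  have hnot00 : ¬ (0 ≤ a ∧ 0 ≤ b) := by
    rintro ⟨ha, hb⟩
    rcases Nat.eq_zero_or_pos a.toNat with ha0 | hapos
    · rcases Nat.eq_zero_or_pos b.toNat with hb0 | hbpos
      · have : a = 0 := by omega
        have : b = 0 := by omega
        simp_all
      · have hb1 : (1:ℝ) ≤ (b:ℝ) := by exact_mod_cast (by omega : (1:ℤ) ≤ b)
        have ha0' : (a:ℝ) = 0 := by exact_mod_cast (by omega : a = 0)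
        have h23 : Real.log 2 < Real.log 3 := Real.log_lt_log (by norm_num) (by norm_num)
        nlinarith [log2_pos, log3_pos]
    · have ha1 : (1:ℝ) ≤ (a:ℝ) := by exact_mod_cast (by omega : (1:ℤ) ≤ a)
      have hb0' : (0:ℝ) ≤ (b:ℝ) := by exact_mod_cast hb
      nlinarith [log2_pos, log3_pos]
  have hnotneg : ¬ (a ≤ 0 ∧ b ≤ 0) := by
    rintro ⟨ha, hb⟩
    have ha' : (a:ℝ) ≤ 0 := by exact_mod_cast ha
    have hb' : (b:ℝ) ≤ 0 := by exact_mod_cast hb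
    nlinarith [log2_pos, log3_pos]
  -- case: a > 0, b < 0 : s itself is of the wanted form
  rcases le_or_gt a 0 with ha | ha
  · -- then b > 0 and a < 0 (if a = 0 then b log3 = s ∈ (0, log2) impossible? b>0 gives ≥ log3)
    have hb : 0 < b := by
      rcases le_or_gt b 0 with hb | hb
      · exact absurd ⟨ha, hb⟩ hnotneg
      · exact hb
    have haneg : a < 0 := by
      rcases lt_or_eq_of_le ha with h | h
      · exact h
      · exfalso
        subst h
        have hb1 : (1:ℝ) ≤ (b:ℝ) := by exact_mod_cast hb
        simp at habs
        nlinarith [log2_pos, log3_pos, Real.log_lt_log (by norm_num : (0:ℝ)<2) (by norm_num : (2:ℝ)<3)]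
    refine ⟨(-a).toNat, b.toNat, ?_, ?_⟩
    · have : ((-a).toNat : ℝ) * Real.log 2 - (b.toNat : ℝ) * Real.log 3 = -s := by
        rw [show ((-a).toNat : ℝ) = -(a:ℝ) by exact_mod_cast congrArg Int.cast (Int.toNat_of_nonneg (by omega)),
          show ((b.toNat : ℝ)) = (b:ℝ) by exact_mod_cast congrArg Int.cast (Int.toNat_of_nonneg (by omega))]
        linarith [habs]
      rw [this]; intro h; linarith [hs0, neg_eq_zero.mp h]
    · have : ((-a).toNat : ℝ) * Real.log 2 - (b.toNat : ℝ) * Real.log 3 = -s := by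
        rw [show ((-a).toNat : ℝ) = -(a:ℝ) by exact_mod_cast congrArg Int.cast (Int.toNat_of_nonneg (by omega)),
          show ((b.toNat : ℝ)) = (b:ℝ) by exact_mod_cast congrArg Int.cast (Int.toNat_of_nonneg (by omega))]
        linarith [habs]
      rw [this, abs_neg, abs_of_pos hs0]; linarith
  · -- a > 0 so b < 0 (else everything too big); s = a log2 - (-b) log3
    have hb : b < 0 := by
      rcases le_or_gt b 0 with hb | hb
      · rcases lt_or_eq_of_le hb with h | h
        · exact h
        · exfalso
          subst h
          have ha1 : (1:ℝ) ≤ (a:ℝ) := by exact_mod_cast ha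
          simp at habs
          nlinarith [log2_pos]
      · exact absurd ⟨le_of_lt ha, le_of_lt hb⟩ hnot00
    refine ⟨a.toNat, (-b).toNat, ?_, ?_⟩
    · have : ((a.toNat) : ℝ) * Real.log 2 - ((-b).toNat : ℝ) * Real.log 3 = s := by
        rw [show ((a.toNat : ℝ)) = (a:ℝ) by exact_mod_cast congrArg Int.cast (Int.toNat_of_nonneg (by omega)),
          show ((-b).toNat : ℝ) = -(b:ℝ) by exact_mod_cast congrArg Int.cast (Int.toNat_of_nonneg (by omega))]
        linarith [habs]
      rw [this]; exact ne_of_gt hs0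
    · have : ((a.toNat) : ℝ) * Real.log 2 - ((-b).toNat : ℝ) * Real.log 3 = s := by
        rw [show ((a.toNat : ℝ)) = (a:ℝ) by exact_mod_cast congrArg Int.cast (Int.toNat_of_nonneg (by omega)),
          show ((-b).toNat : ℝ) = -(b:ℝ) by exact_mod_cast congrArg Int.cast (Int.toNat_of_nonneg (by omega))]
        linarith [habs]
      rw [this, abs_of_pos hs0]; linarith

/-- small negative elements -/
private lemma small_neg' {ε : ℝ} (hε : 0 < ε) :
    ∃ x y : ℕ, -ε < (x : ℝ) * Real.log 2 - y * Real.log 3 ∧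
      (x : ℝ) * Real.log 2 - y * Real.log 3 < 0 := by
  obtain ⟨x₀, y₀, hs0, hsε⟩ := small_elem hε
  set s := (x₀ : ℝ) * Real.log 2 - y₀ * Real.log 3 with hsdef
  rcases lt_or_gt_of_ne hs0 with hneg | hpos
  · exact ⟨x₀, y₀, by rw [abs_of_neg hneg] at hsε; linarith, hneg⟩
  · -- s > 0 small; start from log2 - log3 < 0 and add copies of s
    have hw : Real.log 2 - Real.log 3 < 0 := by
      have := Real.log_lt_log (by norm_num : (0:ℝ)<2) (by norm_num : (2:ℝ)<3)
      linarith
    rw [abs_of_pos hpos] at hsε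
    have hex : ∃ k : ℕ, ¬ ((Real.log 2 - Real.log 3) + (k+1) * s < 0) := by
      obtain ⟨k, hk⟩ := exists_nat_gt ((Real.log 3 - Real.log 2) / s)
      refine ⟨k, ?_⟩
      push_neg
      rw [div_lt_iff₀ hpos] at hk
      nlinarith
    set k := Nat.find hex with hkdef
    have hk1 : ¬ ((Real.log 2 - Real.log 3) + (k+1) * s < 0) := Nat.find_spec hex
    have hk0 : (Real.log 2 - Real.log 3) + k * s < 0 := by
      rcases Nat.eq_zero_or_pos k with h0 | hpos'
      · rw [h0]; push_cast; linarith
      · have hmin := Nat.find_min hex (show k - 1 < k by omega)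
        push_neg at hmin
        have hcast : ((k-1:ℕ):ℝ) + 1 = (k:ℝ) := by
          push_cast [Nat.cast_sub (by omega : 1 ≤ k)]; ring
        rw [hcast] at hmin
        linarith
    refine ⟨1 + k * x₀, 1 + k * y₀, ?_, ?_⟩
    · push_cast
      push_neg at hk1
      nlinarith
    · push_cast
      nlinarith

/-- small positive elements -/
private lemma small_pos {ε : ℝ} (hε : 0 < ε) :
    ∃ x y : ℕ, 0 < (x : ℝ) * Real.log 2 - y * Real.log 3 ∧
      (x : ℝ) * Real.log 2 - y * Real.log 3 < ε := by
  obtain ⟨x₀, y₀, hs0, hsε⟩ := small_elem hε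
  set s := (x₀ : ℝ) * Real.log 2 - y₀ * Real.log 3 with hsdef
  rcases lt_or_gt_of_ne hs0 with hneg | hpos
  · -- s < 0 small; start from 2log2 - log3 > 0 and add copies of s
    have hw : 0 < 2 * Real.log 2 - Real.log 3 := by
      have h : Real.log 3 < Real.log 4 :=
        Real.log_lt_log (by norm_num) (by norm_num)
      have h4 : Real.log 4 = 2 * Real.log 2 := by
        rw [show (4:ℝ) = 2^2 by norm_num, Real.log_pow]; push_cast; ring
      linarith
    rw [abs_of_neg hneg] at hsε
    have hex : ∃ k : ℕ, ¬ (0 < (2 * Real.log 2 - Real.log 3) + (k+1) * s) := by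
      obtain ⟨k, hk⟩ := exists_nat_gt ((2 * Real.log 2 - Real.log 3) / (-s))
      refine ⟨k, ?_⟩
      push_neg
      rw [div_lt_iff₀ (by linarith)] at hk
      nlinarith
    set k := Nat.find hex with hkdef
    have hk1 : ¬ (0 < (2 * Real.log 2 - Real.log 3) + (k+1) * s) := Nat.find_spec hex
    have hk0 : 0 < (2 * Real.log 2 - Real.log 3) + k * s := by
      rcases Nat.eq_zero_or_pos k with h0 | hpos'
      · rw [h0]; push_cast; linarith
      · have hmin := Nat.find_min hex (show k - 1 < k by omega)
        push_neg at hmin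
        have hcast : ((k-1:ℕ):ℝ) + 1 = (k:ℝ) := by
          push_cast [Nat.cast_sub (by omega : 1 ≤ k)]; ring
        rw [hcast] at hmin
        linarith
    refine ⟨2 + k * x₀, 1 + k * y₀, ?_, ?_⟩
    · push_cast
      nlinarith
    · push_cast
      push_neg at hk1
      nlinarith
  · exact ⟨x₀, y₀, hpos, by rw [abs_of_pos hpos] at hsε; linarith⟩

private lemma ratio_in_Ioo_lt_one {c : ℝ} (hc0 : 0 < c) (hc1 : c < 1) :
    ∃ x y : ℕ, c < (2:ℝ)^x / 3^y ∧ (2:ℝ)^x / 3^y < 1 := by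
  have hlc : Real.log c < 0 := Real.log_neg hc0 hc1
  obtain ⟨x, y, h1, h2⟩ := small_neg' (show (0:ℝ) < -Real.log c by linarith)
  refine ⟨x, y, ?_, ?_⟩
  · have : Real.log c < (x : ℝ) * Real.log 2 - y * Real.log 3 := by linarith
    have := Real.exp_lt_exp.mpr this
    rwa [Real.exp_log hc0, Real.exp_sub, ← Real.log_pow, ← Real.log_pow,
      Real.exp_log (by positivity), Real.exp_log (by positivity)] at this
  · have := Real.exp_lt_exp.mpr h2
    rwa [Real.exp_zero, Real.exp_sub, ← Real.log_pow, ← Real.log_pow,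
      Real.exp_log (by positivity), Real.exp_log (by positivity)] at this

private lemma ratio_in_Ioo_gt_one {d : ℝ} (hd : 1 < d) :
    ∃ x y : ℕ, 1 < (2:ℝ)^x / 3^y ∧ (2:ℝ)^x / 3^y < d := by
  have hld : 0 < Real.log d := Real.log_pos hd
  obtain ⟨x, y, h1, h2⟩ := small_pos hld
  refine ⟨x, y, ?_, ?_⟩
  · have := Real.exp_lt_exp.mpr h1
    rwa [Real.exp_zero, Real.exp_sub, ← Real.log_pow, ← Real.log_pow,
      Real.exp_log (by positivity), Real.exp_log (by positivity)] at this
  · have := Real.exp_lt_exp.mpr h2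
    rwa [Real.exp_log (by positivity : (0:ℝ) < d), Real.exp_sub, ← Real.log_pow, ← Real.log_pow,
      Real.exp_log (by positivity), Real.exp_log (by positivity)] at this

private lemma key_iff (p : ℝ) (x y : ℕ) :
    (p * (1/12 : ℝ)^x * (1/2 : ℝ)^y + (1 - p) * (1/3 : ℝ)^x * (1/18 : ℝ)^y
        < (1/6 : ℝ)^x * (1/6 : ℝ)^y)
    ↔ p * ((3:ℝ)^y / 2^x) + (1 - p) * ((2:ℝ)^x / 3^y) < 1 := by
  have hA : (0:ℝ) < (1/6 : ℝ)^x * (1/6 : ℝ)^y := by positivity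
  rw [show (p * (1/12 : ℝ)^x * (1/2 : ℝ)^y + (1 - p) * (1/3 : ℝ)^x * (1/18 : ℝ)^y)
      = ((1/6 : ℝ)^x * (1/6 : ℝ)^y) * (p * ((3:ℝ)^y / 2^x) + (1 - p) * ((2:ℝ)^x / 3^y)) by
    have e1 : ((1/12 : ℝ))^x = (1/6:ℝ)^x * (1/2:ℝ)^x := by
      rw [← mul_pow]; norm_num
    have e2 : ((1/2 : ℝ))^y = (1/6:ℝ)^y * (3:ℝ)^y := by
      rw [← mul_pow]; norm_num
    have e3 : ((1/3 : ℝ))^x = (1/6:ℝ)^x * (2:ℝ)^x := by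
      rw [← mul_pow]; norm_num
    have e4 : ((1/18 : ℝ))^y = (1/6:ℝ)^y * (1/3:ℝ)^y := by
      rw [← mul_pow]; norm_num
    have e5 : ((1/2:ℝ))^x = ((2:ℝ)^x)⁻¹ := by rw [one_div, inv_pow]
    have e6 : ((1/3:ℝ))^y = ((3:ℝ)^y)⁻¹ := by rw [one_div, inv_pow]
    have h2x : ((2:ℝ)^x) ≠ 0 := by positivity
    have h3y : ((3:ℝ)^y) ≠ 0 := by positivity
    rw [e1, e2, e3, e4, e5, e6]
    field_simp]
  constructor
  · intro h
    nlinarith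
  · intro h
    nlinarith

theorem stmt_15 (p : ℝ) (hp : 0 < p ∧ p < 1) :
    (∃ x y : ℕ, p * (1/12 : ℝ)^x * (1/2 : ℝ)^y + (1 - p) * (1/3 : ℝ)^x * (1/18 : ℝ)^y
        < (1/6 : ℝ)^x * (1/6 : ℝ)^y) ↔ p ≠ 1/2 := by
  obtain ⟨hp0, hp1⟩ := hp
  constructor
  · rintro ⟨x, y, h⟩ rfl
    rw [key_iff] at h
    set t := (2:ℝ)^x / 3^y with ht
    have htpos : 0 < t := by positivity
    have hut : ((3:ℝ)^y / 2^x) * t = 1 := by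
      rw [ht]; field_simp
    set u := (3:ℝ)^y / 2^x with hu
    have hupos : 0 < u := by rw [hu]; positivity
    have h2 : t + u < 2 := by nlinarith
    nlinarith [sq_nonneg (t - u),
      mul_pos (show (0:ℝ) < 2 - (t+u) by linarith) (show (0:ℝ) < t + u by linarith)]
  · intro hne
    rcases lt_or_gt_of_ne hne with hlt | hgt
    · -- p < 1/2 : need p/(1-p) < t < 1
      have h1p : 0 < 1 - p := by linarith
      have hc0 : 0 < p / (1 - p) := by positivity
      have hc1 : p / (1 - p) < 1 := by
        rw [div_lt_one h1p]; linarith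
      obtain ⟨x, y, hc, h1⟩ := ratio_in_Ioo_lt_one hc0 hc1
      refine ⟨x, y, ?_⟩
      rw [key_iff]
      set t := (2:ℝ)^x / 3^y with ht
      have htpos : 0 < t := by positivity
      have hut : ((3:ℝ)^y / 2^x) * t = 1 := by
        rw [ht]; field_simp
      set u := (3:ℝ)^y / 2^x with hu
      have hpt : p < (1 - p) * t := by
        rw [div_lt_iff₀ h1p] at hc; linarith [hc]
      nlinarith [mul_pos (sub_pos.2 hpt) (sub_pos.2 h1)]
    · -- p > 1/2 : need 1 < t < p/(1-p)
      have h1p : 0 < 1 - p := by linarith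
      have hd : 1 < p / (1 - p) := by
        rw [lt_div_iff₀ h1p]; linarith
      obtain ⟨x, y, h1, hd'⟩ := ratio_in_Ioo_gt_one hd
      refine ⟨x, y, ?_⟩
      rw [key_iff]
      set t := (2:ℝ)^x / 3^y with ht
      have htpos : 0 < t := by positivity
      have hut : ((3:ℝ)^y / 2^x) * t = 1 := by
        rw [ht]; field_simp
      set u := (3:ℝ)^y / 2^x with hu
      have hpt : (1 - p) * t < p := by
        rw [lt_div_iff₀ h1p] at hd'; linarith [hd']
      nlinarith [mul_pos (sub_pos.2 hpt) (sub_pos.2 h1)]
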